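/- Assume r and θ are nonconstant and the parametrization is proper. Let I ⊆ Ω be a set such that there are infinitely many t ∈ I for which there exists s ∈ I with s ≠ t and P(s) = P(t) (i.e., infinitely many parameters in I generating self-intersections of the curve whose second parameter also lies in I). Then θ is unbounded on I; consequently, either the closure of I contains a real root t₀ of D at which |θ(t)| → ∞ from at least one side, or I is unbounded above with θ(t) → ±∞ as t → +∞, or I is unbounded below with θ(t) → ±∞ as t → −∞. In particular, the closure of I in ℝ ∪ {±∞} contains a value generating a limit point, a limit circle, or a spiral branch of the curve. -/

import Mathlib

open Filter

/-- The domain Ω = {t : B(t) ≠ 0 and D(t) ≠ 0}. -/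
def polarDomain (B D : Polynomial ℝ) : Set ℝ :=
  {t : ℝ | B.eval t ≠ 0 ∧ D.eval t ≠ 0}

/-- The rational function defined by a pair of polynomials, e.g. r(t) = A(t)/B(t). -/
noncomputable def ratFun (A B : Polynomial ℝ) (t : ℝ) : ℝ :=
  A.eval t / B.eval t

/-- The curve in Cartesian coordinates: P(t) = (r(t)·cos(θ(t)), r(t)·sin(θ(t))). -/
noncomputable def polarCurve (A B C D : Polynomial ℝ) (t : ℝ) : ℝ × ℝ :=
  (ratFun A B t * Real.cos (ratFun C D t), ratFun A B t * Real.sin (ratFun C D t))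

/-- Properness: outside a finite set F, (r(t), θ(t)) = (r(s), θ(s)) implies t = s. -/
def IsProperPolar (A B C D : Polynomial ℝ) : Prop :=
  ∃ F : Set ℝ, F.Finite ∧ ∀ t s : ℝ, t ∈ polarDomain B D → s ∈ polarDomain B D →
    t ∉ F → s ∉ F → ratFun A B t = ratFun A B s → ratFun C D t = ratFun C D s → t = s


/-- Evaluation of a bivariate polynomial (inner variable ↦ a, outer variable ↦ b). -/
noncomputable def evxy (a b : ℝ) : Polynomial (Polynomial ℝ) →+* ℝ :=
  Polynomial.eval₂RingHom (Polynomial.evalRingHom a) b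

lemma evxy_apply (a b : ℝ) (x : Polynomial (Polynomial ℝ)) :
    evxy a b x = Polynomial.eval b (x.map (Polynomial.evalRingHom a)) := by
  simp [evxy, Polynomial.eval_map]

/-- If A/B is nonconstant (coprime, not both constant) then A - c B ≠ 0. -/
lemma sub_C_mul_ne (A B : Polynomial ℝ) (hAB : IsCoprime A B)
    (hr : ¬ (A.natDegree = 0 ∧ B.natDegree = 0)) (c : ℝ) :
    A - Polynomial.C c * B ≠ 0 := by
  intro h
  have hA : A = Polynomial.C c * B := by linear_combination h
  have hBA : B ∣ A := ⟨Polynomial.C c, by rw [hA]; ring⟩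
  obtain ⟨u, v, huv⟩ := hAB
  have hB1 : B ∣ 1 := by
    have : B ∣ u * A + v * B := dvd_add (Dvd.dvd.mul_left hBA u) (Dvd.dvd.mul_left dvd_rfl v)
    rwa [huv] at this
  have hBu : IsUnit B := isUnit_of_dvd_one hB1
  have hBdeg : B.natDegree = 0 := Polynomial.natDegree_eq_zero_of_isUnit hBu
  have hAdeg : A.natDegree = 0 := by
    have := Polynomial.natDegree_mul_le (p := Polynomial.C c) (q := B)
    rw [← hA] at this
    simpa [hBdeg] using this
  exact hr ⟨hAdeg, hBdeg⟩

lemma sq_sub_ne (A B : Polynomial ℝ) (hAB : IsCoprime A B)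
    (hr : ¬ (A.natDegree = 0 ∧ B.natDegree = 0)) (c : ℝ) :
    A * A - Polynomial.C (c ^ 2) * (B * B) ≠ 0 := by
  have h1 := sub_C_mul_ne A B hAB hr c
  have h2 := sub_C_mul_ne A B hAB hr (-c)
  have hfac : A * A - Polynomial.C (c ^ 2) * (B * B)
      = (A - Polynomial.C c * B) * (A - Polynomial.C (-c) * B) := by
    rw [map_neg, map_pow]; ring
  rw [hfac]
  exact mul_ne_zero h1 h2

/-- fibers of a nonconstant rational function are finite -/
lemma fiber_finite (A B : Polynomial ℝ) (hAB : IsCoprime A B)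
    (hr : ¬ (A.natDegree = 0 ∧ B.natDegree = 0)) (c : ℝ) :
    {t : ℝ | B.eval t ≠ 0 ∧ A.eval t / B.eval t = c}.Finite := by
  apply Set.Finite.subset (Polynomial.finite_setOf_isRoot (sub_C_mul_ne A B hAB hr c))
  rintro t ⟨hB, hval⟩
  have : A.eval t = c * B.eval t := by field_simp at hval; linarith [hval]
  simp [Polynomial.IsRoot, this]

/-- A nonzero univariate polynomial cannot annihilate a nonconstant rational function
on an infinite set. -/
lemma ann_rat_false (A B : Polynomial ℝ) (hAB : IsCoprime A B)
    (hr : ¬ (A.natDegree = 0 ∧ B.natDegree = 0)) (p : Polynomial ℝ) (hp : p ≠ 0)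
    (T : Set ℝ) (hT : T.Infinite) (hTB : ∀ t ∈ T, B.eval t ≠ 0)
    (h0 : ∀ t ∈ T, p.eval (A.eval t / B.eval t) = 0) : False := by
  have hcov : T ⊆ ⋃ c ∈ {x : ℝ | p.IsRoot x}, {t : ℝ | B.eval t ≠ 0 ∧ A.eval t / B.eval t = c} := by
    intro t ht
    refine Set.mem_biUnion (show p.IsRoot (A.eval t / B.eval t) from h0 t ht) ⟨hTB t ht, rfl⟩
  exact hT (Set.Finite.subset (Set.Finite.biUnion (Polynomial.finite_setOf_isRoot hp)
    (fun c _ => fiber_finite A B hAB hr c)) hcov)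

lemma domain_infinite (B D : Polynomial ℝ) (hB : B ≠ 0) (hD : D ≠ 0) :
    {t : ℝ | B.eval t ≠ 0 ∧ D.eval t ≠ 0}.Infinite := by
  have hfin : {t : ℝ | ¬ (B.eval t ≠ 0 ∧ D.eval t ≠ 0)}.Finite := by
    apply Set.Finite.subset ((Polynomial.finite_setOf_isRoot hB).union
      (Polynomial.finite_setOf_isRoot hD))
    intro t ht
    simp only [Set.mem_setOf_eq, not_and_or, not_not] at ht
    simpa [Polynomial.IsRoot] using ht
  have := hfin.infinite_compl
  rw [Set.compl_setOf] at this
  simpa using this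
  

/-! ### Topological lemmas for part 2 -/

lemma poly_tendsto_nhdsWithin (R : Polynomial ℝ) (t₀ : ℝ) (s : Set ℝ) :
    Tendsto (fun t => R.eval t) (nhdsWithin t₀ s) (nhds (R.eval t₀)) :=
  ((R.continuous).tendsto t₀).mono_left nhdsWithin_le_nhds

lemma pole_tendsto (P Q : Polynomial ℝ) (hQ : Q ≠ 0) (hPQ : IsCoprime P Q) (t₀ : ℝ)
    (h0 : Q.eval t₀ = 0) :
    Tendsto (fun t => |P.eval t / Q.eval t|) (nhdsWithin t₀ (Set.Ioi t₀)) atTop := by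
  have hP0 : P.eval t₀ ≠ 0 := by
    obtain ⟨u, v, huv⟩ := hPQ
    have h1 := congrArg (Polynomial.eval t₀) huv
    simp only [Polynomial.eval_add, Polynomial.eval_mul, Polynomial.eval_one, h0, mul_zero,
      add_zero] at h1
    intro h
    rw [h, mul_zero] at h1
    exact zero_ne_one h1
  have hnum : Tendsto (fun t => |P.eval t|) (nhdsWithin t₀ (Set.Ioi t₀)) (nhds |P.eval t₀|) :=
    (poly_tendsto_nhdsWithin P t₀ _).abs
  have hden0 : Tendsto (fun t => |Q.eval t|) (nhdsWithin t₀ (Set.Ioi t₀)) (nhds 0) := by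
    simpa [h0] using (poly_tendsto_nhdsWithin Q t₀ (Set.Ioi t₀)).abs
  have hev : ∀ᶠ t in nhdsWithin t₀ (Set.Ioi t₀), Q.eval t ≠ 0 := by
    have hfin := Polynomial.finite_setOf_isRoot hQ
    have hall : ∀ᶠ t in nhdsWithin t₀ (Set.Ioi t₀), ∀ x ∈ {x : ℝ | Q.IsRoot x}, t ≠ x := by
      refine hfin.eventually_all.mpr ?_
      intro x hx
      by_cases hx0 : x = t₀
      · subst hx0
        exact eventually_mem_nhdsWithin.mono (fun t ht => ne_of_gt ht)
      · exact (eventually_ne_nhds (Ne.symm hx0)).filter_mono nhdsWithin_le_nhds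
    refine hall.mono ?_
    intro t ht h
    exact ht t (by simpa [Polynomial.IsRoot] using h) rfl
  have hden : Tendsto (fun t => |Q.eval t|) (nhdsWithin t₀ (Set.Ioi t₀))
      (nhdsWithin 0 (Set.Ioi 0)) :=
    tendsto_nhdsWithin_iff.mpr ⟨hden0, hev.mono (fun t ht => abs_pos.mpr ht)⟩
  have hinv : Tendsto (fun t => |Q.eval t|⁻¹) (nhdsWithin t₀ (Set.Ioi t₀)) atTop := by
    have := hden.inv_tendsto_nhdsGT_zero
    simpa [Pi.inv_def] using this
  have hmul := hnum.pos_mul_atTop (abs_pos.mpr hP0) hinv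
  refine hmul.congr (fun t => ?_)
  rw [abs_div, div_eq_mul_inv]

lemma bound_on_compact (P Q : Polynomial ℝ) (K : Set ℝ) (hK : IsCompact K)
    (hQK : ∀ t ∈ K, Q.eval t ≠ 0) : ∃ M, ∀ t ∈ K, |P.eval t / Q.eval t| ≤ M := by
  have hc : ContinuousOn (fun t => P.eval t / Q.eval t) K :=
    (P.continuous).continuousOn.div (Q.continuous).continuousOn hQK
  obtain ⟨M, hM⟩ := hK.exists_bound_of_continuousOn hc
  exact ⟨M, fun t ht => by simpa [Real.norm_eq_abs, abs_div] using hM t ht⟩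

lemma comp_negX_eval (P : Polynomial ℝ) (t : ℝ) :
    (P.comp (-Polynomial.X)).eval t = P.eval (-t) := by
  simp [Polynomial.eval_comp]

lemma comp_negX_negX (P : Polynomial ℝ) : (P.comp (-Polynomial.X)).comp (-Polynomial.X) = P := by
  rw [Polynomial.comp_assoc]
  simp

lemma comp_negX_ne (P : Polynomial ℝ) (hP : P ≠ 0) : P.comp (-Polynomial.X) ≠ 0 := by
  intro h
  apply hP
  have := congrArg (fun q => Polynomial.comp q (-Polynomial.X)) h
  simpa [comp_negX_negX] using this

lemma comp_negX_degree (P : Polynomial ℝ) : (P.comp (-Polynomial.X)).degree = P.degree := by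
  by_cases hP : P = 0
  · simp [hP]
  · rw [Polynomial.degree_eq_natDegree hP, Polynomial.degree_eq_natDegree (comp_negX_ne P hP),
      Polynomial.natDegree_comp]
    simp

lemma rat_tendsto_atBot_of_atTop (P Q : Polynomial ℝ) (l : Filter ℝ)
    (h : Tendsto (fun t => (P.comp (-Polynomial.X)).eval t / (Q.comp (-Polynomial.X)).eval t)
      atTop l) :
    Tendsto (fun t => P.eval t / Q.eval t) atBot l := by
  have hcomp := h.comp (tendsto_neg_atBot_atTop (G := ℝ))
  refine hcomp.congr (fun t => ?_)
  simp [Function.comp, comp_negX_eval]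

lemma rat_cases_atTop (P Q : Polynomial ℝ) (hQ : Q ≠ 0) (hdeg : Q.degree < P.degree) :
    Tendsto (fun t => P.eval t / Q.eval t) atTop atTop ∨
      Tendsto (fun t => P.eval t / Q.eval t) atTop atBot := by
  rcases le_or_gt 0 (P.leadingCoeff / Q.leadingCoeff) with h | h
  · exact Or.inl (Polynomial.div_tendsto_atTop_of_degree_gt P Q hdeg hQ h)
  · exact Or.inr (Polynomial.div_tendsto_atBot_of_degree_gt P Q hdeg hQ h.le)

lemma rat_cases_atBot (P Q : Polynomial ℝ) (hQ : Q ≠ 0) (hdeg : Q.degree < P.degree) :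
    Tendsto (fun t => P.eval t / Q.eval t) atBot atTop ∨
      Tendsto (fun t => P.eval t / Q.eval t) atBot atBot := by
  have hdeg' : (Q.comp (-Polynomial.X)).degree < (P.comp (-Polynomial.X)).degree := by
    rwa [comp_negX_degree, comp_negX_degree]
  rcases rat_cases_atTop (P.comp (-Polynomial.X)) (Q.comp (-Polynomial.X))
      (comp_negX_ne Q hQ) hdeg' with h | h
  · exact Or.inl (rat_tendsto_atBot_of_atTop P Q _ h)
  · exact Or.inr (rat_tendsto_atBot_of_atTop P Q _ h)

lemma rat_lim_atTop (P Q : Polynomial ℝ) (hdeg : P.degree ≤ Q.degree) :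
    ∃ L, Tendsto (fun t => P.eval t / Q.eval t) atTop (nhds L) := by
  rcases lt_or_eq_of_le hdeg with h | h
  · exact ⟨0, Polynomial.div_tendsto_zero_of_degree_lt P Q h⟩
  · exact ⟨_, Polynomial.div_tendsto_leadingCoeff_div_of_degree_eq P Q h⟩

lemma rat_lim_atBot (P Q : Polynomial ℝ) (hdeg : P.degree ≤ Q.degree) :
    ∃ L, Tendsto (fun t => P.eval t / Q.eval t) atBot (nhds L) := by
  have hdeg' : (P.comp (-Polynomial.X)).degree ≤ (Q.comp (-Polynomial.X)).degree := by
    rwa [comp_negX_degree, comp_negX_degree]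
  obtain ⟨L, hL⟩ := rat_lim_atTop (P.comp (-Polynomial.X)) (Q.comp (-Polynomial.X)) hdeg'
  exact ⟨L, rat_tendsto_atBot_of_atTop P Q _ hL⟩

lemma eventually_bound_of_lim {l : Filter ℝ} {f : ℝ → ℝ} {L : ℝ}
    (h : Tendsto f l (nhds L)) : ∀ᶠ t in l, |f t| ≤ |L| + 1 :=
  h.abs.eventually (eventually_le_nhds (lt_add_one |L|))

/-- Part 2 of the theorem: unboundedness of θ on I forces a limit feature. -/
lemma part_two (P Q : Polynomial ℝ) (hQ : Q ≠ 0) (hPQ : IsCoprime P Q) (I : Set ℝ)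
    (hunb : ¬ ∃ M : ℝ, ∀ t ∈ I, |P.eval t / Q.eval t| ≤ M) :
    (∃ t₀ : ℝ, Q.eval t₀ = 0 ∧ t₀ ∈ closure I ∧
        (Tendsto (fun t => |P.eval t / Q.eval t|) (nhdsWithin t₀ (Set.Iio t₀)) atTop ∨
         Tendsto (fun t => |P.eval t / Q.eval t|) (nhdsWithin t₀ (Set.Ioi t₀)) atTop)) ∨
     (¬ BddAbove I ∧
        (Tendsto (fun t => P.eval t / Q.eval t) atTop atTop ∨
         Tendsto (fun t => P.eval t / Q.eval t) atTop atBot)) ∨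
     (¬ BddBelow I ∧
        (Tendsto (fun t => P.eval t / Q.eval t) atBot atTop ∨
         Tendsto (fun t => P.eval t / Q.eval t) atBot atBot)) := by
  by_cases hpole : ∃ t₀, Q.eval t₀ = 0 ∧ t₀ ∈ closure I
  · obtain ⟨t₀, h1, h2⟩ := hpole
    exact Or.inl ⟨t₀, h1, h2, Or.inr (pole_tendsto P Q hQ hPQ t₀ h1)⟩
  · have hnr : ∀ t₀ ∈ closure I, Q.eval t₀ ≠ 0 := fun t₀ ht h => hpole ⟨t₀, h, ht⟩
    by_cases hdeg : Q.degree < P.degree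
    · by_cases hba : BddAbove I
      · by_cases hbb : BddBelow I
        · -- I bounded: compact contradiction
          exfalso
          obtain ⟨b, hb⟩ := hba
          obtain ⟨a, ha⟩ := hbb
          have hsub : closure I ⊆ Set.Icc a b :=
            closure_minimal (fun t ht => ⟨ha ht, hb ht⟩) isClosed_Icc
          have hKc : IsCompact (closure I) :=
            IsCompact.of_isClosed_subset isCompact_Icc isClosed_closure hsub
          obtain ⟨M, hM⟩ := bound_on_compact P Q (closure I) hKc hnr
          exact hunb ⟨M, fun t ht => hM t (subset_closure ht)⟩
        · exact Or.inr (Or.inr ⟨hbb, rat_cases_atBot P Q hQ hdeg⟩)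
      · exact Or.inr (Or.inl ⟨hba, rat_cases_atTop P Q hQ hdeg⟩)
    · exfalso
      have hle : P.degree ≤ Q.degree := not_lt.mp hdeg
      obtain ⟨L1, hL1⟩ := rat_lim_atTop P Q hle
      obtain ⟨L2, hL2⟩ := rat_lim_atBot P Q hle
      obtain ⟨R1, hR1⟩ := eventually_atTop.mp (eventually_bound_of_lim hL1)
      obtain ⟨R2, hR2⟩ := eventually_atBot.mp (eventually_bound_of_lim hL2)
      have hKc : IsCompact (closure I ∩ Set.Icc R2 R1) := by
        refine IsCompact.of_isClosed_subset isCompact_Icc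
          (isClosed_closure.inter isClosed_Icc) Set.inter_subset_right
      obtain ⟨M3, hM3⟩ := bound_on_compact P Q _ hKc (fun t ht => hnr t ht.1)
      apply hunb
      refine ⟨max (max (|L1| + 1) (|L2| + 1)) M3, fun t ht => ?_⟩
      by_cases h1 : t ≤ R2
      · exact le_trans (hR2 t h1) (le_max_of_le_left (le_max_right _ _))
      · by_cases h2 : R1 ≤ t
        · exact le_trans (hR1 t h2) (le_max_of_le_left (le_max_left _ _))
        · refine le_trans (hM3 t ⟨subset_closure ht, ⟨(not_le.mp h1).le, (not_le.mp h2).le⟩⟩)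
            (le_max_right _ _)

/-! ### The numerator polynomial bridge -/

noncomputable def NP (A B P Q : Polynomial ℝ) (u : Polynomial (Polynomial ℝ)) (m n : ℕ) :
    Polynomial ℝ :=
  ∑ j ∈ Finset.range (n+1), (∑ i ∈ Finset.range (m+1),
    Polynomial.C ((u.coeff j).coeff i) * A^i * B^(m-i)) * P^j * Q^(n-j)

lemma NP_eval (A B P Q : Polynomial ℝ) (u : Polynomial (Polynomial ℝ)) (m n : ℕ)
    (hn : u.natDegree < n+1) (hm : ∀ j, (u.coeff j).natDegree < m+1)
    (t : ℝ) (hBt : B.eval t ≠ 0) (hQt : Q.eval t ≠ 0) :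
    (NP A B P Q u m n).eval t
      = evxy (A.eval t / B.eval t) (P.eval t / Q.eval t) u * (B.eval t)^m * (Q.eval t)^n := by
  set a := A.eval t / B.eval t with ha
  set b := P.eval t / Q.eval t with hb
  have hA : A.eval t = a * B.eval t := by rw [ha]; field_simp
  have hP : P.eval t = b * Q.eval t := by rw [hb]; field_simp
  have hrhs : evxy a b u
      = ∑ j ∈ Finset.range (n+1), (u.coeff j).eval a * b^j := by
    rw [evxy_apply]
    rw [Polynomial.eval_eq_sum_range' (lt_of_le_of_lt Polynomial.natDegree_map_le hn)]
    exact Finset.sum_congr rfl (fun j _ => by rw [Polynomial.coeff_map]; rfl)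
  have hinner : ∀ j, (u.coeff j).eval a = ∑ i ∈ Finset.range (m+1), (u.coeff j).coeff i * a^i :=
    fun j => Polynomial.eval_eq_sum_range' (hm j) a
  have hlhs : (NP A B P Q u m n).eval t
      = ∑ j ∈ Finset.range (n+1), (∑ i ∈ Finset.range (m+1),
          (u.coeff j).coeff i * (A.eval t)^i * (B.eval t)^(m-i)) *
          (P.eval t)^j * (Q.eval t)^(n-j) := by
    rw [NP, Polynomial.eval_finset_sum]
    refine Finset.sum_congr rfl (fun j _ => ?_)
    rw [Polynomial.eval_mul, Polynomial.eval_mul, Polynomial.eval_pow, Polynomial.eval_pow,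
      Polynomial.eval_finset_sum]
    congr 2
    refine Finset.sum_congr rfl (fun i _ => ?_)
    simp [Polynomial.eval_mul, Polynomial.eval_pow]
  rw [hlhs, hrhs]
  have hBpow : ∀ i ∈ Finset.range (m+1), (A.eval t)^i * (B.eval t)^(m-i)
      = a^i * (B.eval t)^m := by
    intro i hi
    rw [hA, mul_pow, mul_assoc, ← pow_add, Nat.add_sub_cancel' (Nat.lt_succ_iff.mp
      (Finset.mem_range.mp hi))]
  have hQpow : ∀ j ∈ Finset.range (n+1), (P.eval t)^j * (Q.eval t)^(n-j)
      = b^j * (Q.eval t)^n := by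
    intro j hj
    rw [hP, mul_pow, mul_assoc, ← pow_add, Nat.add_sub_cancel' (Nat.lt_succ_iff.mp
      (Finset.mem_range.mp hj))]
  rw [Finset.sum_mul, Finset.sum_mul]
  refine Finset.sum_congr rfl (fun j hj => ?_)
  have h1 : (∑ i ∈ Finset.range (m+1),
      (u.coeff j).coeff i * (A.eval t)^i * (B.eval t)^(m-i))
      = (∑ i ∈ Finset.range (m+1), (u.coeff j).coeff i * a^i) * (B.eval t)^m := by
    rw [Finset.sum_mul]
    refine Finset.sum_congr rfl (fun i hi => ?_)
    rw [mul_assoc, hBpow i hi]; ring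
  rw [mul_assoc, hQpow j hj, h1, hinner j]
  ring

/-- Pointwise annihilation of (r, θ) by a bivariate polynomial. -/
def AnnP (A B P Q : Polynomial ℝ) (u : Polynomial (Polynomial ℝ)) : Prop :=
  ∀ t : ℝ, B.eval t ≠ 0 → Q.eval t ≠ 0 →
    evxy (A.eval t / B.eval t) (P.eval t / Q.eval t) u = 0

/-- x-degree of a bivariate polynomial. -/
noncomputable def mX (u : Polynomial (Polynomial ℝ)) : ℕ :=
  u.support.sup fun j => (u.coeff j).natDegree

lemma coeff_natDegree_le_mX (u : Polynomial (Polynomial ℝ)) (j : ℕ) :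
    (u.coeff j).natDegree ≤ mX u := by
  by_cases hj : j ∈ u.support
  · exact Finset.le_sup (f := fun j => (u.coeff j).natDegree) hj
  · rw [Polynomial.notMem_support_iff.mp hj]
    simp

lemma ann_of_NP (A B P Q : Polynomial ℝ) (u : Polynomial (Polynomial ℝ))
    (hNP : NP A B P Q u (mX u) u.natDegree = 0) : AnnP A B P Q u := by
  intro t hBt hQt
  have := NP_eval A B P Q u (mX u) u.natDegree (Nat.lt_succ_self _)
    (fun j => Nat.lt_succ_of_le (coeff_natDegree_le_mX u j)) t hBt hQt
  rw [hNP] at this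
  simp only [Polynomial.eval_zero] at this
  rcases mul_eq_zero.mp this.symm with h | h
  · rcases mul_eq_zero.mp h with h' | h'
    · exact h'
    · exact absurd h' (pow_ne_zero _ hBt)
  · exact absurd h (pow_ne_zero _ hQt)

lemma NP_of_ann (A B P Q : Polynomial ℝ) (hB : B ≠ 0) (hQ : Q ≠ 0)
    (u : Polynomial (Polynomial ℝ)) (hann : AnnP A B P Q u) (m n : ℕ)
    (hn : u.natDegree < n+1) (hm : ∀ j, (u.coeff j).natDegree < m+1) :
    NP A B P Q u m n = 0 := by
  apply Polynomial.eq_zero_of_infinite_isRoot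
  apply Set.Infinite.mono _ (domain_infinite B Q hB hQ)
  rintro t ⟨hBt, hQt⟩
  have := NP_eval A B P Q u m n hn hm t hBt hQt
  rw [hann t hBt hQt] at this
  simpa [Polynomial.IsRoot] using this

lemma ann_mul (A B P Q : Polynomial ℝ) (hB : B ≠ 0) (hQ : Q ≠ 0)
    (u v : Polynomial (Polynomial ℝ)) (h : AnnP A B P Q (u * v)) :
    AnnP A B P Q u ∨ AnnP A B P Q v := by
  set Pu := NP A B P Q u (mX u) u.natDegree with hPu
  set Pv := NP A B P Q v (mX v) v.natDegree with hPv
  have hprod : Pu * Pv = 0 := by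
    apply Polynomial.eq_zero_of_infinite_isRoot
    apply Set.Infinite.mono _ (domain_infinite B Q hB hQ)
    rintro t ⟨hBt, hQt⟩
    have h1 := NP_eval A B P Q u (mX u) u.natDegree (Nat.lt_succ_self _)
      (fun j => Nat.lt_succ_of_le (coeff_natDegree_le_mX u j)) t hBt hQt
    have h2 := NP_eval A B P Q v (mX v) v.natDegree (Nat.lt_succ_self _)
      (fun j => Nat.lt_succ_of_le (coeff_natDegree_le_mX v j)) t hBt hQt
    have h3 : evxy (A.eval t / B.eval t) (P.eval t / Q.eval t) u *
        evxy (A.eval t / B.eval t) (P.eval t / Q.eval t) v = 0 := by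
      rw [← map_mul]; exact h t hBt hQt
    simp only [Set.mem_setOf_eq, Polynomial.IsRoot, Polynomial.eval_mul, hPu, hPv, h1, h2]
    calc evxy (A.eval t / B.eval t) (P.eval t / Q.eval t) u * B.eval t ^ mX u *
          Q.eval t ^ u.natDegree *
          (evxy (A.eval t / B.eval t) (P.eval t / Q.eval t) v * B.eval t ^ mX v *
            Q.eval t ^ v.natDegree)
        = (evxy (A.eval t / B.eval t) (P.eval t / Q.eval t) u *
            evxy (A.eval t / B.eval t) (P.eval t / Q.eval t) v) *
            (B.eval t ^ mX u * B.eval t ^ mX v * (Q.eval t ^ u.natDegree *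
            Q.eval t ^ v.natDegree)) := by ring
      _ = 0 := by rw [h3, zero_mul]
  rcases mul_eq_zero.mp hprod with h' | h'
  · exact Or.inl (ann_of_NP A B P Q u h')
  · exact Or.inr (ann_of_NP A B P Q v h')

lemma ann_of_NP' (A B P Q : Polynomial ℝ) (u : Polynomial (Polynomial ℝ)) (m n : ℕ)
    (hn : u.natDegree < n+1) (hm : ∀ j, (u.coeff j).natDegree < m+1)
    (hNP : NP A B P Q u m n = 0) : AnnP A B P Q u := by
  intro t hBt hQt
  have := NP_eval A B P Q u m n hn hm t hBt hQt
  rw [hNP] at this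
  simp only [Polynomial.eval_zero] at this
  rcases mul_eq_zero.mp this.symm with h | h
  · rcases mul_eq_zero.mp h with h' | h'
    · exact h'
    · exact absurd h' (pow_ne_zero _ hBt)
  · exact absurd h (pow_ne_zero _ hQt)

lemma coeff_CXsum {R : Type*} [Semiring R] (n : ℕ) (q : ℕ → R) (j₀ : ℕ) :
    (∑ j ∈ Finset.range n, Polynomial.C (q j) * Polynomial.X ^ j).coeff j₀
      = if j₀ < n then q j₀ else 0 := by
  rw [Polynomial.finset_sum_coeff]
  simp_rw [Polynomial.coeff_C_mul, Polynomial.coeff_X_pow, mul_ite, mul_one, mul_zero]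
  rw [Finset.sum_ite_eq (Finset.range n) j₀ q]
  simp [Finset.mem_range]

lemma exists_ann (A B P Q : Polynomial ℝ) (hB : B ≠ 0) (hQ : Q ≠ 0) :
    ∃ h : Polynomial (Polynomial ℝ), h ≠ 0 ∧ AnnP A B P Q h := by
  classical
  set S := A.natDegree + B.natDegree + P.natDegree + Q.natDegree with hS
  set Δ := S + 1 with hΔ
  set N := Δ + 1 with hN
  set M := N * Δ + 1 with hM
  set g : Fin (N+1) × Fin (N+1) → Polynomial ℝ := fun p =>
    A^(p.2 : ℕ) * B^(N - (p.2:ℕ)) * P^(p.1:ℕ) * Q^(N - (p.1:ℕ)) with hg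
  have hdeg : ∀ p, (g p).natDegree < M := by
    intro p
    have hi : (p.2 : ℕ) ≤ N := Nat.lt_succ_iff.mp p.2.isLt
    have hj : (p.1 : ℕ) ≤ N := Nat.lt_succ_iff.mp p.1.isLt
    have h1 : (g p).natDegree ≤ (p.2:ℕ) * A.natDegree + (N - (p.2:ℕ)) * B.natDegree
        + (p.1:ℕ) * P.natDegree + (N - (p.1:ℕ)) * Q.natDegree := by
      refine le_trans Polynomial.natDegree_mul_le ?_
      refine add_le_add ?_ (Polynomial.natDegree_pow_le)
      refine le_trans Polynomial.natDegree_mul_le ?_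
      refine add_le_add ?_ (Polynomial.natDegree_pow_le)
      refine le_trans Polynomial.natDegree_mul_le ?_
      exact add_le_add Polynomial.natDegree_pow_le Polynomial.natDegree_pow_le
    have h2 : (p.2:ℕ) * A.natDegree + (N - (p.2:ℕ)) * B.natDegree
        + (p.1:ℕ) * P.natDegree + (N - (p.1:ℕ)) * Q.natDegree ≤ N * S := by
      have := Nat.mul_le_mul_right A.natDegree hi
      have := Nat.mul_le_mul_right B.natDegree (Nat.sub_le N (p.2:ℕ))
      have := Nat.mul_le_mul_right P.natDegree hj
      have := Nat.mul_le_mul_right Q.natDegree (Nat.sub_le N (p.1:ℕ))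
      have hdist : N * S = N * A.natDegree + N * B.natDegree + N * P.natDegree
          + N * Q.natDegree := by rw [hS]; ring
      omega
    have h3 : N * S < M := by
      have : N * S ≤ N * Δ := Nat.mul_le_mul_left N (Nat.le_succ S)
      omega
    omega
  let L0 : ((Fin (N+1) × Fin (N+1)) → ℝ) →ₗ[ℝ] Polynomial ℝ :=
    { toFun := fun c => ∑ p, c p • g p,
      map_add' := fun x y => by simp [add_smul, Finset.sum_add_distrib],
      map_smul' := fun r x => by simp [smul_smul, Finset.smul_sum] }
  have hmem : ∀ c, L0 c ∈ Polynomial.degreeLT ℝ M := by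
    intro c
    refine Submodule.sum_mem _ (fun p _ => Submodule.smul_mem _ _ ?_)
    rw [Polynomial.mem_degreeLT]
    exact lt_of_le_of_lt (Polynomial.degree_le_natDegree)
      (by exact_mod_cast WithBot.coe_lt_coe.mpr (hdeg p))
  let L := L0.codRestrict (Polynomial.degreeLT ℝ M) hmem
  have hnotinj : ¬ Function.Injective L := by
    intro hinj
    haveI : Module.Finite ℝ (Polynomial.degreeLT ℝ M) :=
      Module.Finite.equiv (Polynomial.degreeLTEquiv ℝ M).symm
    have hle := LinearMap.finrank_le_finrank_of_injective hinj
    have hr1 : Module.finrank ℝ ((Fin (N+1) × Fin (N+1)) → ℝ) = (N+1) * (N+1) := by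
      rw [Module.finrank_fintype_fun_eq_card, Fintype.card_prod, Fintype.card_fin]
    have hr2 : Module.finrank ℝ (Polynomial.degreeLT ℝ M) = M := by
      rw [(Polynomial.degreeLTEquiv ℝ M).finrank_eq, Module.finrank_fintype_fun_eq_card,
        Fintype.card_fin]
    rw [hr1, hr2] at hle
    have : M < (N+1) * (N+1) := by
      rw [hM, hN, hΔ]; nlinarith
    omega
  obtain ⟨x, y, hxy, hne⟩ := Function.not_injective_iff.mp hnotinj
  set c := x - y with hc
  have hc0 : c ≠ 0 := sub_ne_zero.mpr hne
  have hLc : L0 c = 0 := by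
    have : L c = 0 := by rw [hc, map_sub, hxy, sub_self]
    exact congrArg Subtype.val this
  set cc : ℕ → ℕ → ℝ := fun j i => if hji : j < N+1 ∧ i < N+1 then c (⟨j, hji.1⟩, ⟨i, hji.2⟩)
    else 0 with hcc
  set inner : ℕ → Polynomial ℝ :=
    fun j => ∑ i ∈ Finset.range (N+1), Polynomial.C (cc j i) * Polynomial.X ^ i with hinner
  set h : Polynomial (Polynomial ℝ) :=
    ∑ j ∈ Finset.range (N+1), Polynomial.C (inner j) * Polynomial.X ^ j with hh
  have hcoeffh : ∀ j, h.coeff j = if j < N+1 then inner j else 0 := fun j => coeff_CXsum _ _ _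
  have hcoeffi : ∀ j i, (inner j).coeff i = if i < N+1 then cc j i else 0 :=
    fun j i => coeff_CXsum _ _ _
  have hcoeff2 : ∀ (j i : ℕ), j < N+1 → i < N+1 → (h.coeff j).coeff i = cc j i := by
    intro j i hj hi
    rw [hcoeffh, if_pos hj, hcoeffi, if_pos hi]
  have hne0 : h ≠ 0 := by
    obtain ⟨p₀, hp₀⟩ := Function.ne_iff.mp hc0
    intro h0
    apply hp₀
    have := hcoeff2 p₀.1 p₀.2 p₀.1.isLt p₀.2.isLt
    rw [h0] at this
    simp only [Polynomial.coeff_zero] at this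
    rw [hcc] at this
    simp only [dif_pos (And.intro p₀.1.isLt p₀.2.isLt)] at this
    simpa using this.symm
  refine ⟨h, hne0, ?_⟩
  have hdegh : h.natDegree < N + 1 := by
    have : h.natDegree ≤ N := by
      apply Polynomial.natDegree_sum_le_of_forall_le
      intro j hj
      refine le_trans Polynomial.natDegree_mul_le ?_
      simp only [Polynomial.natDegree_C, zero_add]
      exact le_trans (Polynomial.natDegree_X_pow_le j) (Nat.lt_succ_iff.mp (Finset.mem_range.mp hj))
    omega
  have hdegc : ∀ j, (h.coeff j).natDegree < N + 1 := by
    intro j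
    rw [hcoeffh]
    by_cases hj : j < N+1
    · rw [if_pos hj]
      have : (inner j).natDegree ≤ N := by
        apply Polynomial.natDegree_sum_le_of_forall_le
        intro i hi
        refine le_trans Polynomial.natDegree_mul_le ?_
        simp only [Polynomial.natDegree_C, zero_add]
        exact le_trans (Polynomial.natDegree_X_pow_le i)
          (Nat.lt_succ_iff.mp (Finset.mem_range.mp hi))
      omega
    · rw [if_neg hj]; simp
  apply ann_of_NP' A B P Q h N N hdegh hdegc
  have hNPL : NP A B P Q h N N = L0 c := by
    show (∑ j ∈ Finset.range (N+1), (∑ i ∈ Finset.range (N+1),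
      Polynomial.C ((h.coeff j).coeff i) * A^i * B^(N-i)) * P^j * Q^(N-j)) = ∑ p, c p • g p
    rw [Fintype.sum_prod_type]
    rw [← Fin.sum_univ_eq_sum_range (fun j => (∑ i ∈ Finset.range (N+1),
      Polynomial.C ((h.coeff j).coeff i) * A^i * B^(N-i)) * P^j * Q^(N-j)) (N+1)]
    refine Finset.sum_congr rfl (fun j _ => ?_)
    rw [Finset.sum_mul, Finset.sum_mul]
    rw [← Fin.sum_univ_eq_sum_range (fun i =>
      Polynomial.C ((h.coeff (j:ℕ)).coeff i) * A^i * B^(N-i) * P^(j:ℕ) * Q^(N-(j:ℕ))) (N+1)]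
    refine Finset.sum_congr rfl (fun i _ => ?_)
    rw [hcoeff2 (j:ℕ) (i:ℕ) j.isLt i.isLt, hcc]
    simp only [dif_pos (And.intro j.isLt i.isLt), Fin.eta]
    rw [hg, Polynomial.smul_eq_C_mul]
    ring
  rw [hNPL, hLc]

lemma evxy_C (a b : ℝ) (p : Polynomial ℝ) : evxy a b (Polynomial.C p) = p.eval a := by
  simp [evxy]

lemma ann_C_false (A B P Q : Polynomial ℝ) (hB : B ≠ 0) (hQ : Q ≠ 0)
    (hAB : IsCoprime A B) (hrA : ¬ (A.natDegree = 0 ∧ B.natDegree = 0))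
    (p : Polynomial ℝ) (hp : p ≠ 0) (hann : AnnP A B P Q (Polynomial.C p)) : False := by
  apply ann_rat_false A B hAB hrA p hp {t : ℝ | B.eval t ≠ 0 ∧ Q.eval t ≠ 0}
    (domain_infinite B Q hB hQ) (fun t ht => ht.1)
  rintro t ⟨hBt, hQt⟩
  have := hann t hBt hQt
  rwa [evxy_C] at this

lemma mX_mul_C (u : Polynomial (Polynomial ℝ)) (p : Polynomial ℝ) (hu : u ≠ 0) (hp : p ≠ 0) :
    mX (u * Polynomial.C p) = mX u + p.natDegree := by
  have hsupp : (u * Polynomial.C p).support = u.support := by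
    ext j
    simp [Polynomial.mem_support_iff, Polynomial.coeff_mul_C, hp]
  have h1 : mX (u * Polynomial.C p)
      = u.support.sup (fun j => (u.coeff j).natDegree + p.natDegree) := by
    rw [mX, hsupp]
    apply Finset.sup_congr rfl
    intro j hj
    rw [Polynomial.coeff_mul_C, Polynomial.natDegree_mul (Polynomial.mem_support_iff.mp hj) hp]
  rw [h1]
  have hne : u.support.Nonempty := Polynomial.nonempty_support_iff.mpr hu
  apply le_antisymm
  · apply Finset.sup_le
    intro j hj
    exact Nat.add_le_add_right (coeff_natDegree_le_mX u j) _
  · obtain ⟨j₀, hj₀, hj₀eq⟩ := Finset.exists_mem_eq_sup u.support hne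
      (fun j => (u.coeff j).natDegree)
    have := Finset.le_sup (f := fun j => (u.coeff j).natDegree + p.natDegree) hj₀
    rw [mX, hj₀eq]
    omega

lemma exists_irred_ann (A B P Q : Polynomial ℝ) (hB : B ≠ 0) (hQ : Q ≠ 0)
    (hAB : IsCoprime A B) (hrA : ¬ (A.natDegree = 0 ∧ B.natDegree = 0)) :
    ∃ h : Polynomial (Polynomial ℝ), Irreducible h ∧ AnnP A B P Q h ∧ 1 ≤ h.natDegree := by
  classical
  obtain ⟨w, hw0, hwann⟩ := exists_ann A B P Q hB hQ
  have hP1 : ∃ n, ∃ u : Polynomial (Polynomial ℝ), (u ≠ 0 ∧ AnnP A B P Q u) ∧ u.natDegree = n :=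
    ⟨w.natDegree, w, ⟨hw0, hwann⟩, rfl⟩
  set n₀ := Nat.find hP1 with hn₀
  obtain ⟨w1, hw1, hw1deg⟩ := Nat.find_spec hP1
  have hP2 : ∃ d, ∃ u : Polynomial (Polynomial ℝ),
      ((u ≠ 0 ∧ AnnP A B P Q u) ∧ u.natDegree = n₀) ∧ mX u = d :=
    ⟨mX w1, w1, ⟨hw1, hw1deg⟩, rfl⟩
  set d₀ := Nat.find hP2 with hd₀
  obtain ⟨h, ⟨⟨hh0, hhann⟩, hhdeg⟩, hhmX⟩ := Nat.find_spec hP2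
  have hmin1 : ∀ u : Polynomial (Polynomial ℝ), u ≠ 0 → AnnP A B P Q u → n₀ ≤ u.natDegree :=
    fun u h1 h2 => Nat.find_min' hP1 ⟨u, ⟨h1, h2⟩, rfl⟩
  have hmin2 : ∀ u : Polynomial (Polynomial ℝ), u ≠ 0 → AnnP A B P Q u → u.natDegree = n₀ →
      d₀ ≤ mX u := fun u h1 h2 h3 => Nat.find_min' hP2 ⟨u, ⟨⟨h1, h2⟩, h3⟩, rfl⟩
  -- h has positive y-degree
  have hpos : 1 ≤ h.natDegree := by
    by_contra hcon
    have h0 : h.natDegree = 0 := by omega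
    obtain ⟨p, hp⟩ := Polynomial.natDegree_eq_zero.mp h0
    have hpne : p ≠ 0 := by
      intro h'
      rw [h'] at hp
      exact hh0 (by rw [← hp, map_zero])
    exact ann_C_false A B P Q hB hQ hAB hrA p hpne (by rwa [hp])
  refine ⟨h, ⟨?_, ?_⟩, hhann, hpos⟩
  · intro hu
    have := Polynomial.natDegree_eq_zero_of_isUnit hu
    omega
  · intro u v huv
    by_contra hboth
    push_neg at hboth
    obtain ⟨hnu, hnv⟩ := hboth
    have key : ∀ u v : Polynomial (Polynomial ℝ), h = u * v → AnnP A B P Q u →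
        ¬IsUnit u → ¬IsUnit v → False := by
      intro u v huv hannu hnu hnv
      have hu0 : u ≠ 0 := by rintro rfl; rw [zero_mul] at huv; exact hh0 huv
      have hv0 : v ≠ 0 := by rintro rfl; rw [mul_zero] at huv; exact hh0 huv
      have hdeg : h.natDegree = u.natDegree + v.natDegree := by
        rw [huv, Polynomial.natDegree_mul hu0 hv0]
      have hun : n₀ ≤ u.natDegree := hmin1 u hu0 hannu
      have hv0deg : v.natDegree = 0 := by omega
      obtain ⟨p, hp⟩ := Polynomial.natDegree_eq_zero.mp hv0deg
      have hpne : p ≠ 0 := by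
        intro h'
        rw [h'] at hp
        exact hv0 (by rw [← hp, map_zero])
      by_cases hpdeg : p.natDegree = 0
      · obtain ⟨e, he⟩ := Polynomial.natDegree_eq_zero.mp hpdeg
        have hene : e ≠ 0 := by
          intro h'
          rw [h'] at he
          exact hpne (by rw [← he, map_zero])
        exact hnv (by rw [← hp, ← he]
                      exact (Polynomial.isUnit_C).mpr ((Polynomial.isUnit_C).mpr
                        (isUnit_iff_ne_zero.mpr hene)))
      · have hmXh : mX h = mX u + p.natDegree := by
          rw [huv, ← hp]
          exact mX_mul_C u p hu0 hpne
        have hudeg : u.natDegree = n₀ := by omega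
        have := hmin2 u hu0 hannu hudeg
        omega
    rcases ann_mul A B P Q hB hQ u v (huv ▸ hhann) with hu | hv
    · exact key u v huv hu hnu hnv
    · exact key v u (by rw [huv, mul_comm]) hv hnv hnu

/-! ### The substitution (x, y) ↦ (εx, y + κ) -/

noncomputable def sigm (ε : ℝ) : Polynomial ℝ →+* Polynomial ℝ :=
  Polynomial.eval₂RingHom Polynomial.C (Polynomial.C ε * Polynomial.X)

lemma sigm_apply (ε : ℝ) (p : Polynomial ℝ) :
    sigm ε p = p.comp (Polynomial.C ε * Polynomial.X) := rfl

lemma sigm_C (ε c : ℝ) : sigm ε (Polynomial.C c) = Polynomial.C c := by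
  simp [sigm]

lemma sigm_X (ε : ℝ) : sigm ε Polynomial.X = Polynomial.C ε * Polynomial.X := by
  simp [sigm]

lemma sigm_sigm (ε : ℝ) (hε : ε * ε = 1) (p : Polynomial ℝ) : sigm ε (sigm ε p) = p := by
  rw [sigm_apply, sigm_apply, Polynomial.comp_assoc]
  have : (Polynomial.C ε * Polynomial.X).comp (Polynomial.C ε * Polynomial.X)
      = (Polynomial.X : Polynomial ℝ) := by
    rw [Polynomial.mul_comp, Polynomial.C_comp, Polynomial.X_comp, ← mul_assoc,
      ← Polynomial.C_mul, hε, Polynomial.C_1, one_mul]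
  rw [this, Polynomial.comp_X]

lemma sigm_injective (ε : ℝ) (hε : ε * ε = 1) : Function.Injective (sigm ε) :=
  Function.LeftInverse.injective (g := sigm ε) (sigm_sigm ε hε)

noncomputable def TrB (ε κ : ℝ) (h : Polynomial (Polynomial ℝ)) : Polynomial (Polynomial ℝ) :=
  (h.map (sigm ε)).comp (Polynomial.X + Polynomial.C (Polynomial.C κ))

lemma TrB_mul (ε κ : ℝ) (f g : Polynomial (Polynomial ℝ)) :
    TrB ε κ (f * g) = TrB ε κ f * TrB ε κ g := by
  rw [TrB, Polynomial.map_mul, Polynomial.mul_comp]; rfl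

lemma TrB_C (ε κ : ℝ) (e : Polynomial ℝ) :
    TrB ε κ (Polynomial.C e) = Polynomial.C (sigm ε e) := by
  rw [TrB, Polynomial.map_C, Polynomial.C_comp]

lemma TrB_TrB (ε κ : ℝ) (hε : ε * ε = 1) (h : Polynomial (Polynomial ℝ)) :
    TrB ε κ (TrB ε κ h) = h.comp (Polynomial.X + Polynomial.C (Polynomial.C (2*κ))) := by
  have hQ : (Polynomial.X + Polynomial.C (Polynomial.C κ) :
      Polynomial (Polynomial ℝ)).map (sigm ε) = Polynomial.X + Polynomial.C (Polynomial.C κ) := by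
    rw [Polynomial.map_add, Polynomial.map_X, Polynomial.map_C, sigm_C]
  have hid : (sigm ε).comp (sigm ε) = RingHom.id (Polynomial ℝ) :=
    RingHom.ext (sigm_sigm ε hε)
  rw [TrB, TrB, Polynomial.map_comp, hQ, Polynomial.map_map, hid, Polynomial.map_id,
    Polynomial.comp_assoc]
  congr 1
  rw [Polynomial.add_comp, Polynomial.X_comp, Polynomial.C_comp, add_assoc, ← Polynomial.C_add,
    ← Polynomial.C_add, ← two_mul]

lemma evalRingHom_comp_sigm (a ε : ℝ) :
    (Polynomial.evalRingHom a).comp (sigm ε) = Polynomial.evalRingHom (ε * a) := by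
  apply Polynomial.ringHom_ext
  · intro c
    simp [sigm_C]
  · simp [sigm_X]

lemma evxy_shift (a b κ : ℝ) (w : Polynomial (Polynomial ℝ)) :
    evxy a b (w.comp (Polynomial.X + Polynomial.C (Polynomial.C κ))) = evxy a (b + κ) w := by
  rw [evxy_apply, evxy_apply, Polynomial.map_comp, Polynomial.eval_comp]
  congr 1
  simp

lemma evxy_TrB (a b ε κ : ℝ) (h : Polynomial (Polynomial ℝ)) :
    evxy a b (TrB ε κ h) = evxy (ε * a) (b + κ) h := by
  rw [TrB, evxy_shift, evxy_apply, Polynomial.map_map, evalRingHom_comp_sigm, ← evxy_apply]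

lemma natDegree_TrB (ε κ : ℝ) (hε : ε * ε = 1) (h : Polynomial (Polynomial ℝ)) :
    (TrB ε κ h).natDegree = h.natDegree := by
  rw [TrB, Polynomial.natDegree_comp, Polynomial.natDegree_X_add_C, mul_one,
    Polynomial.natDegree_map_eq_of_injective (sigm_injective ε hε)]

lemma leadingCoeff_comp_linear (w : Polynomial (Polynomial ℝ)) (c : Polynomial ℝ) :
    (w.comp (Polynomial.X + Polynomial.C c)).leadingCoeff = w.leadingCoeff := by
  by_cases hw : w.natDegree = 0
  · obtain ⟨e, he⟩ := Polynomial.natDegree_eq_zero.mp hw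
    rw [← he, Polynomial.C_comp]
  · rw [Polynomial.leadingCoeff_comp (by rw [Polynomial.natDegree_X_add_C]; exact one_ne_zero),
      Polynomial.leadingCoeff_X_add_C, one_pow, mul_one]

lemma leadingCoeff_TrB (ε κ : ℝ) (hε : ε * ε = 1) (h : Polynomial (Polynomial ℝ)) :
    (TrB ε κ h).leadingCoeff = sigm ε h.leadingCoeff := by
  rw [TrB, leadingCoeff_comp_linear, Polynomial.leadingCoeff_map_of_injective (sigm_injective ε hε) h]

lemma TrB_ne_zero (ε κ : ℝ) (hε : ε * ε = 1) (h : Polynomial (Polynomial ℝ)) (hh : h ≠ 0) :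
    TrB ε κ h ≠ 0 := by
  intro hcon
  apply hh
  have h1 := leadingCoeff_TrB ε κ hε h
  rw [hcon, Polynomial.leadingCoeff_zero] at h1
  have h2 : sigm ε h.leadingCoeff = sigm ε 0 := by rw [map_zero]; exact h1.symm
  have := sigm_injective ε hε h2
  exact Polynomial.leadingCoeff_eq_zero.mp this


/-! ### The two cases of the main dichotomy -/

lemma dvd_case_false (A B P Q : Polynomial ℝ) (hB : B ≠ 0) (hQ : Q ≠ 0)
    (hAB : IsCoprime A B) (hrA : ¬ (A.natDegree = 0 ∧ B.natDegree = 0))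
    (h : Polynomial (Polynomial ℝ)) (hh0 : h ≠ 0) (hann : AnnP A B P Q h)
    (ε κ : ℝ) (hε : ε * ε = 1) (hκ : κ ≠ 0)
    (e1 e2 : Polynomial ℝ) (he2 : e2 ≠ 0)
    (heq : Polynomial.C e2 * TrB ε κ h = Polynomial.C e1 * h) : False := by
  have he1 : e1 ≠ 0 := by
    intro h'
    rw [h', Polynomial.C_0, zero_mul] at heq
    exact TrB_ne_zero ε κ hε h hh0 (by
      rcases mul_eq_zero.mp heq with h'' | h''
      · exact absurd h'' (by simpa [Polynomial.C_eq_zero] using he2)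
      · exact h'')
  -- apply the transform to the equation
  have h2 : Polynomial.C (sigm ε e2) * TrB ε κ (TrB ε κ h)
      = Polynomial.C (sigm ε e1) * TrB ε κ h := by
    have := congrArg (TrB ε κ) heq
    rwa [TrB_mul, TrB_mul, TrB_C, TrB_C] at this
  have h3 : Polynomial.C (e2 * sigm ε e2) *
      (h.comp (Polynomial.X + Polynomial.C (Polynomial.C (2*κ))))
      = Polynomial.C (e1 * sigm ε e1) * h := by
    have hcalc : Polynomial.C e2 * (Polynomial.C (sigm ε e2) * TrB ε κ (TrB ε κ h))
        = Polynomial.C e2 * (Polynomial.C (sigm ε e1) * TrB ε κ h) := by rw [h2]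
    rw [TrB_TrB ε κ hε] at hcalc
    calc Polynomial.C (e2 * sigm ε e2) *
          (h.comp (Polynomial.X + Polynomial.C (Polynomial.C (2*κ))))
        = Polynomial.C e2 * (Polynomial.C (sigm ε e2) *
            (h.comp (Polynomial.X + Polynomial.C (Polynomial.C (2*κ))))) := by
          rw [map_mul]; ring
      _ = Polynomial.C e2 * (Polynomial.C (sigm ε e1) * TrB ε κ h) := hcalc
      _ = Polynomial.C (sigm ε e1) * (Polynomial.C e2 * TrB ε κ h) := by ring
      _ = Polynomial.C (sigm ε e1) * (Polynomial.C e1 * h) := by rw [heq]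
      _ = Polynomial.C (e1 * sigm ε e1) * h := by rw [map_mul]; ring
  have hσe2 : sigm ε e2 ≠ 0 := by
    intro h'
    exact he2 (sigm_injective ε hε (by rw [h', map_zero]))
  have hE2 : e2 * sigm ε e2 ≠ 0 := mul_ne_zero he2 hσe2
  -- compare leading coefficients
  have hlc : e2 * sigm ε e2 = e1 * sigm ε e1 := by
    have := congrArg Polynomial.leadingCoeff h3
    rw [Polynomial.leadingCoeff_mul, Polynomial.leadingCoeff_mul,
      leadingCoeff_comp_linear, Polynomial.leadingCoeff_C, Polynomial.leadingCoeff_C] at this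
    exact mul_right_cancel₀ (Polynomial.leadingCoeff_ne_zero.mpr hh0) this
  have hcomp : h.comp (Polynomial.X + Polynomial.C (Polynomial.C (2*κ))) = h := by
    rw [hlc] at h3
    have hE1 : e1 * sigm ε e1 ≠ 0 := by rw [← hlc]; exact hE2
    exact mul_left_cancel₀ (by simpa [Polynomial.C_eq_zero] using hE1) h3
  -- periodicity in the second variable
  have hper : ∀ a b : ℝ, evxy a b h = evxy a (b + 2*κ) h := by
    intro a b
    conv_lhs => rw [← hcomp]
    exact evxy_shift a b (2*κ) h
  -- hence h is independent of y
  have hconst : ∀ a : ℝ, h.map (Polynomial.evalRingHom a)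
      = Polynomial.C ((h.coeff 0).eval a) := by
    intro a
    set qa := h.map (Polynomial.evalRingHom a) with hqa
    have hqev : ∀ b : ℝ, qa.eval b = qa.eval (b + 2*κ) := by
      intro b
      have := hper a b
      rwa [evxy_apply, evxy_apply] at this
    have hiter : ∀ n : ℕ, qa.eval (2*κ*n) = qa.eval 0 := by
      intro n
      induction n with
      | zero => norm_num
      | succ m ih =>
        have : 2*κ*((m:ℝ)+1) = 2*κ*m + 2*κ := by ring
        rw [Nat.cast_succ, this, ← hqev, ih]
    have hw : qa - Polynomial.C (qa.eval 0) = 0 := by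
      apply Polynomial.eq_zero_of_infinite_isRoot
      apply Set.infinite_of_injective_forall_mem (f := fun n : ℕ => 2*κ*n)
      · intro m n hmn
        have h2κ : (2:ℝ)*κ ≠ 0 := by
          intro hc
          apply hκ
          linarith [hc]
        exact Nat.cast_injective (mul_left_cancel₀ h2κ hmn)
      · intro n
        simp only [Set.mem_setOf_eq, Polynomial.IsRoot, Polynomial.eval_sub,
          Polynomial.eval_C, hiter n, sub_self]
    have : qa = Polynomial.C (qa.eval 0) := by linear_combination hw
    rw [this]
    congr 1
    rw [← Polynomial.coeff_zero_eq_eval_zero, hqa, Polynomial.coeff_map]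
    rfl
  set p0 := h.coeff 0 with hp0def
  have hp0 : p0 ≠ 0 := by
    intro h'
    apply hh0
    apply Polynomial.ext
    intro j
    rw [Polynomial.coeff_zero]
    have hcj : ∀ a : ℝ, (h.coeff j).eval a = 0 := by
      intro a
      have h1 := hconst a
      have h2 : ((h.coeff 0).eval a) = 0 := by rw [← hp0def, h', Polynomial.eval_zero]
      rw [h2, Polynomial.C_0] at h1
      have := congrArg (fun q => Polynomial.coeff q j) h1
      simpa [Polynomial.coeff_map] using this
    have := Polynomial.funext (p := h.coeff j) (q := 0) (fun a => by simp [hcj a])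
    exact this
  apply ann_rat_false A B hAB hrA p0 hp0 {t : ℝ | B.eval t ≠ 0 ∧ Q.eval t ≠ 0}
    (domain_infinite B Q hB hQ) (fun t ht => ht.1)
  rintro t ⟨hBt, hQt⟩
  have h1 := hann t hBt hQt
  rw [evxy_apply, hconst] at h1
  rwa [Polynomial.eval_C] at h1

section FractionField

local notation "K" => FractionRing (Polynomial ℝ)

noncomputable def phiF : Polynomial ℝ →+* K := algebraMap (Polynomial ℝ) K

lemma phiF_injective : Function.Injective phiF := IsFractionRing.injective (Polynomial ℝ) K

lemma mapF_injective : Function.Injective (Polynomial.map phiF) :=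
  Polynomial.map_injective phiF phiF_injective

lemma prim_of_irred (h : Polynomial (Polynomial ℝ)) (hirr : Irreducible h)
    (hpos : 1 ≤ h.natDegree) : h.IsPrimitive := by
  intro r hr
  obtain ⟨w, hw⟩ := hr
  rcases hirr.isUnit_or_isUnit hw with hu | hu
  · exact Polynomial.isUnit_C.mp hu
  · exfalso
    have h1 : h.natDegree = 0 := by
      have := Polynomial.natDegree_mul_le (p := Polynomial.C r) (q := w)
      rw [← hw] at this
      have h2 := Polynomial.natDegree_eq_zero_of_isUnit hu
      simpa [Polynomial.natDegree_C, h2] using this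
    omega

/-- The coprime case: a Bézout identity forces the first coordinate to take finitely
many values on the infinite set T. -/
lemma coprime_case_false (A B P Q : Polynomial ℝ) (hB : B ≠ 0) (hQ : Q ≠ 0)
    (hAB : IsCoprime A B) (hrA : ¬ (A.natDegree = 0 ∧ B.natDegree = 0))
    (h : Polynomial (Polynomial ℝ)) (hirr : Irreducible h) (hpos : 1 ≤ h.natDegree)
    (hann : AnnP A B P Q h) (ε κ : ℝ)
    (hnd : ¬ (h.map phiF ∣ (TrB ε κ h).map phiF))
    (T : Set ℝ) (hT : T.Infinite) (hTdom : ∀ t ∈ T, B.eval t ≠ 0 ∧ Q.eval t ≠ 0)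
    (hTann2 : ∀ t ∈ T,
      evxy (A.eval t / B.eval t) (P.eval t / Q.eval t) (TrB ε κ h) = 0) : False := by
  have hirrK : Irreducible (h.map phiF) :=
    ((prim_of_irred h hirr hpos).irreducible_iff_irreducible_map_fraction_map).mp hirr
  have hcop : IsCoprime (h.map phiF) ((TrB ε κ h).map phiF) :=
    hirrK.coprime_iff_not_dvd.mpr hnd
  obtain ⟨u, v, huv⟩ := hcop
  obtain ⟨du, hU⟩ :=
    IsLocalization.integerNormalization_map_to_map (nonZeroDivisors (Polynomial ℝ)) u
  obtain ⟨dv, hV⟩ :=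
    IsLocalization.integerNormalization_map_to_map (nonZeroDivisors (Polynomial ℝ)) v
  set U := IsLocalization.integerNormalization (nonZeroDivisors (Polynomial ℝ)) u with hUdef
  set V := IsLocalization.integerNormalization (nonZeroDivisors (Polynomial ℝ)) v with hVdef
  have hU' : Polynomial.map phiF U = (du : Polynomial ℝ) • u := hU
  have hV' : Polynomial.map phiF V = (dv : Polynomial ℝ) • v := hV
  have hsmul : ∀ (d : Polynomial ℝ) (w : Polynomial K),
      (d • w : Polynomial K) = Polynomial.C (phiF d) * w := by
    intro d w
    ext n
    rw [Polynomial.coeff_smul, Polynomial.coeff_C_mul, Algebra.smul_def]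
    rfl
  have hid : U * h * Polynomial.C (dv : Polynomial ℝ)
      + V * TrB ε κ h * Polynomial.C (du : Polynomial ℝ)
      = Polynomial.C ((du : Polynomial ℝ) * (dv : Polynomial ℝ)) := by
    apply mapF_injective
    rw [Polynomial.map_add, Polynomial.map_mul, Polynomial.map_mul, Polynomial.map_mul,
      Polynomial.map_mul, Polynomial.map_C, Polynomial.map_C, Polynomial.map_C, hU', hV',
      hsmul, hsmul, map_mul]
    calc Polynomial.C (phiF du) * u * Polynomial.map phiF h * Polynomial.C (phiF dv)
          + Polynomial.C (phiF dv) * v * Polynomial.map phiF (TrB ε κ h) *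
              Polynomial.C (phiF du)
        = Polynomial.C (phiF du) * Polynomial.C (phiF dv) *
            (u * Polynomial.map phiF h + v * Polynomial.map phiF (TrB ε κ h)) := by ring
      _ = Polynomial.C (phiF du) * Polynomial.C (phiF dv) := by rw [huv, mul_one]
      _ = Polynomial.C (phiF du * phiF dv) := by rw [Polynomial.C_mul]
  have hdudv : (du : Polynomial ℝ) * (dv : Polynomial ℝ) ≠ 0 :=
    mul_ne_zero (nonZeroDivisors.ne_zero du.2) (nonZeroDivisors.ne_zero dv.2)
  apply ann_rat_false A B hAB hrA ((du : Polynomial ℝ) * (dv : Polynomial ℝ)) hdudv T hT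
    (fun t ht => (hTdom t ht).1)
  intro t ht
  obtain ⟨hBt, hQt⟩ := hTdom t ht
  have := congrArg (evxy (A.eval t / B.eval t) (P.eval t / Q.eval t)) hid
  simp only [map_add, map_mul, evxy_C, hann t hBt hQt, hTann2 t ht] at this
  simpa using this.symm

/-- In the divisibility case we can clear denominators. -/
lemma dvd_to_heq (h : Polynomial (Polynomial ℝ)) (hh0 : h ≠ 0) (ε κ : ℝ) (hε : ε * ε = 1)
    (hd : h.map phiF ∣ (TrB ε κ h).map phiF) :
    ∃ e1 e2 : Polynomial ℝ, e2 ≠ 0 ∧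
      Polynomial.C e2 * TrB ε κ h = Polynomial.C e1 * h := by
  obtain ⟨w, hw⟩ := hd
  have hh'0 : h.map phiF ≠ 0 := fun hc => hh0 (mapF_injective (by rwa [Polynomial.map_zero]))
  have hT0 : (TrB ε κ h).map phiF ≠ 0 := fun hc =>
    TrB_ne_zero ε κ hε h hh0 (mapF_injective (by rwa [Polynomial.map_zero]))
  have hw0 : w ≠ 0 := by
    intro hc
    rw [hc, mul_zero] at hw
    exact hT0 hw
  have hdeg : w.natDegree = 0 := by
    have h1 : ((TrB ε κ h).map phiF).natDegree = (h.map phiF).natDegree + w.natDegree := by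
      rw [hw, Polynomial.natDegree_mul hh'0 hw0]
    rw [Polynomial.natDegree_map_eq_of_injective phiF_injective,
      Polynomial.natDegree_map_eq_of_injective phiF_injective, natDegree_TrB ε κ hε] at h1
    omega
  obtain ⟨c', hc'⟩ := Polynomial.natDegree_eq_zero.mp hdeg
  obtain ⟨e1, e2, he2, hc'eq⟩ := IsFractionRing.div_surjective (A := Polynomial ℝ) c'
  have hφe2 : phiF e2 ≠ 0 := by
    intro hc
    exact nonZeroDivisors.ne_zero he2 (phiF_injective (by rwa [map_zero]))
  refine ⟨e1, e2, nonZeroDivisors.ne_zero he2, ?_⟩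
  apply mapF_injective
  have hc'eq2 : phiF e1 / phiF e2 = c' := hc'eq
  rw [Polynomial.map_mul, Polynomial.map_mul, Polynomial.map_C, Polynomial.map_C, hw, ← hc']
  calc Polynomial.C (phiF e2) * (Polynomial.map phiF h * Polynomial.C c')
      = Polynomial.map phiF h * Polynomial.C (phiF e2 * c') := by
        rw [Polynomial.C_mul]; ring
    _ = Polynomial.C (phiF e1) * Polynomial.map phiF h := by
        have h5 : phiF e2 * c' = phiF e1 := by rw [← hc'eq2]; field_simp
        rw [h5]; ring

end FractionField


lemma part_one (A B C D : Polynomial ℝ) (hB : B ≠ 0) (hD : D ≠ 0)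
    (hAB : IsCoprime A B) (hCD : IsCoprime C D)
    (hr : ¬ (A.natDegree = 0 ∧ B.natDegree = 0))
    (hθ : ¬ (C.natDegree = 0 ∧ D.natDegree = 0))
    (hproper : IsProperPolar A B C D)
    (I : Set ℝ) (hI : I ⊆ polarDomain B D)
    (hinf : {t ∈ I | ∃ s ∈ I, s ≠ t ∧ polarCurve A B C D s = polarCurve A B C D t}.Infinite) :
    ¬ ∃ M : ℝ, ∀ t ∈ I, |ratFun C D t| ≤ M := by
  rintro ⟨M, hM⟩
  obtain ⟨F, hFfin, hFprop⟩ := hproper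
  have hA0 : A ≠ 0 := by
    intro h'
    rw [h'] at hAB
    have hBu := isCoprime_zero_left.mp hAB
    exact hr ⟨by rw [h']; exact Polynomial.natDegree_zero,
      Polynomial.natDegree_eq_zero_of_isUnit hBu⟩
  set S := {t ∈ I | ∃ s ∈ I, s ≠ t ∧ polarCurve A B C D s = polarCurve A B C D t} with hSdef
  have hbadA : {t : ℝ | A.eval t = 0}.Finite := Polynomial.finite_setOf_isRoot hA0
  have hbad3 : (⋃ s ∈ F,
      {t : ℝ | (A*A - Polynomial.C ((ratFun A B s)^2) * (B*B)).eval t = 0}).Finite :=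
    hFfin.biUnion (fun s _ =>
      Polynomial.finite_setOf_isRoot (sq_sub_ne A B hAB hr (ratFun A B s)))
  set bad := (F ∪ {t : ℝ | A.eval t = 0}) ∪ ⋃ s ∈ F,
      {t : ℝ | (A*A - Polynomial.C ((ratFun A B s)^2) * (B*B)).eval t = 0} with hbaddef
  have hbadfin : bad.Finite := ((hFfin.union hbadA).union hbad3)
  set S' := S \ bad with hS'def
  have hS' : S'.Infinite := hinf.diff hbadfin
  set K₀ : ℤ := ⌈(2*M)/Real.pi⌉ with hK₀
  have key : ∀ t : ℝ, ∃ s : ℝ, ∃ k : ℤ, ∃ e : ℝ, t ∈ S' →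
      (s ∈ I ∧ s ∉ F ∧ k ≠ 0 ∧ |k| ≤ K₀ ∧ (e = 1 ∨ e = -1) ∧
        ratFun A B s = e * ratFun A B t ∧ ratFun C D s = ratFun C D t + (k:ℝ) * Real.pi) := by
    intro t
    by_cases ht : t ∈ S'
    swap
    · exact ⟨t, 1, 1, fun h => absurd h ht⟩
    obtain ⟨htS, htbad⟩ := ht
    obtain ⟨htI, s, hsI, hst, hPP⟩ := htS
    have htF : t ∉ F := fun h => htbad (Or.inl (Or.inl h))
    have htA : A.eval t ≠ 0 := fun h => htbad (Or.inl (Or.inr h))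
    have htb3 : t ∉ ⋃ s ∈ F,
        {t : ℝ | (A*A - Polynomial.C ((ratFun A B s)^2) * (B*B)).eval t = 0} :=
      fun h => htbad (Or.inr h)
    have hBt := (hI htI).1
    have hDt := (hI htI).2
    have hBs := (hI hsI).1
    have hDs := (hI hsI).2
    set rt := ratFun A B t with hrt
    set rs := ratFun A B s with hrs'
    set θt := ratFun C D t with hθt
    set θs := ratFun C D s with hθs
    have hrt0 : rt ≠ 0 := div_ne_zero htA hBt
    have hAt : A.eval t = rt * B.eval t := by rw [hrt, ratFun]; field_simp
    simp only [polarCurve, Prod.mk.injEq] at hPP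
    obtain ⟨hx, hy⟩ := hPP
    rw [← hrt, ← hrs', ← hθt, ← hθs] at hx hy
    have hsq : rs^2 = rt^2 := by
      calc rs^2 = rs^2 * (Real.sin θs ^ 2 + Real.cos θs ^ 2) := by
            rw [Real.sin_sq_add_cos_sq, mul_one]
        _ = (rs * Real.cos θs)^2 + (rs * Real.sin θs)^2 := by ring
        _ = (rt * Real.cos θt)^2 + (rt * Real.sin θt)^2 := by rw [hx, hy]
        _ = rt^2 := by
            have := Real.sin_sq_add_cos_sq θt
            nlinarith [this]
    have hsF : s ∉ F := by
      intro hsFmem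
      apply htb3
      refine Set.mem_biUnion hsFmem ?_
      show (A*A - Polynomial.C (rs^2) * (B*B)).eval t = 0
      simp only [Polynomial.eval_sub, Polynomial.eval_mul, Polynomial.eval_C]
      rw [hAt]
      have : rt^2 = rs^2 := hsq.symm
      nlinarith [this]
    have hεcases : rs = rt ∨ rs = -rt := by
      have hfac : (rs - rt) * (rs + rt) = 0 := by nlinarith [hsq]
      rcases mul_eq_zero.mp hfac with h' | h'
      · exact Or.inl (by linarith)
      · exact Or.inr (by linarith)
    obtain ⟨e, he, hrse⟩ : ∃ e : ℝ, (e = 1 ∨ e = -1) ∧ rs = e * rt := by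
      rcases hεcases with h' | h'
      · exact ⟨1, Or.inl rfl, by rw [one_mul]; exact h'⟩
      · exact ⟨-1, Or.inr rfl, by rw [neg_one_mul]; exact h'⟩
    have hee : e * e = 1 := by rcases he with h' | h' <;> rw [h'] <;> norm_num
    have hcos : Real.cos θs = e * Real.cos θt := by
      have h1 : e * rt * Real.cos θs = rt * Real.cos θt := by rw [← hrse]; exact hx
      apply mul_left_cancel₀ hrt0
      have h2 := congrArg (fun x => e * x) h1
      have h3 : (e*e) * (rt * Real.cos θs) = rt * (e * Real.cos θt) := by linear_combination h2
      rwa [hee, one_mul] at h3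
    have hsin : Real.sin θs = e * Real.sin θt := by
      have h1 : e * rt * Real.sin θs = rt * Real.sin θt := by rw [← hrse]; exact hy
      apply mul_left_cancel₀ hrt0
      have h2 := congrArg (fun x => e * x) h1
      have h3 : (e*e) * (rt * Real.sin θs) = rt * (e * Real.sin θt) := by linear_combination h2
      rwa [hee, one_mul] at h3
    have hsinsub : Real.sin (θs - θt) = 0 := by
      rw [Real.sin_sub, hsin, hcos]; ring
    obtain ⟨k, hk⟩ := Real.sin_eq_zero_iff.mp hsinsub
    have hcossub : Real.cos (θs - θt) = e := by
      rw [Real.cos_sub, hsin, hcos]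
      have := Real.sin_sq_add_cos_sq θt
      linear_combination e * this
    have hk0 : k ≠ 0 := by
      intro h0
      rw [h0] at hk
      simp only [Int.cast_zero, zero_mul] at hk
      have hθeq : θs = θt := by linarith
      have he1 : e = 1 := by
        rw [← hcossub, hθeq, sub_self, Real.cos_zero]
      have hrseq : rt = rs := by rw [hrse, he1, one_mul]
      exact hst (hFprop s t (hI hsI) (hI htI) hsF htF (by rw [← hrs', ← hrt]; exact hrseq.symm)
        (by rw [← hθs, ← hθt]; exact hθeq))
    have hkb : |k| ≤ K₀ := by
      have h2 : |θs - θt| ≤ 2*M := by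
        have ha := hM s hsI
        have hb := hM t htI
        rw [← hθs] at ha
        rw [← hθt] at hb
        calc |θs - θt| ≤ |θs| + |θt| := by
              rw [sub_eq_add_neg]
              exact (abs_add_le _ _).trans (by rw [abs_neg])
          _ ≤ 2*M := by linarith
      have h1 : |(k:ℝ)| * Real.pi ≤ 2*M := by
        have : |(k:ℝ) * Real.pi| = |θs - θt| := by rw [hk]
        rw [abs_mul, abs_of_pos Real.pi_pos] at this
        linarith [this, h2]
      have h3 : (|k| : ℝ) ≤ (2*M)/Real.pi := by
        rw [le_div_iff₀ Real.pi_pos]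
        exact_mod_cast h1
      have h4 : ((|k| : ℤ) : ℝ) ≤ (K₀ : ℝ) := by
        push_cast
        exact h3.trans (Int.le_ceil _)
      exact_mod_cast h4
    exact ⟨s, k, e, fun _ => ⟨hsI, hsF, hk0, hkb, he, hrse, by linarith [hk]⟩⟩
  choose sf kf ef hkey using key
  set Idx := (Finset.Icc (-K₀) K₀) ×ˢ ({(1:ℝ), -1} : Finset ℝ) with hIdx
  have hcover : S' ⊆ ⋃ p ∈ (Idx : Set (ℤ × ℝ)), {t ∈ S' | kf t = p.1 ∧ ef t = p.2} := by
    intro t ht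
    have props := hkey t ht
    refine Set.mem_biUnion (show ((kf t, ef t) : ℤ × ℝ) ∈ (Idx : Set (ℤ × ℝ)) from ?_)
      ⟨ht, rfl, rfl⟩
    have h1 := abs_le.mp props.2.2.2.1
    have h2 := props.2.2.2.2.1
    simp only [hIdx, Finset.coe_product, Set.mem_prod, Finset.mem_coe, Finset.mem_Icc,
      Finset.mem_insert, Finset.mem_singleton]
    exact ⟨⟨h1.1, h1.2⟩, by rcases h2 with h | h <;> simp [h]⟩
  have hfibex : ∃ p ∈ (Idx : Set (ℤ × ℝ)), {t ∈ S' | kf t = p.1 ∧ ef t = p.2}.Infinite := by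
    by_contra hcon
    push_neg at hcon
    have hfin : (⋃ p ∈ (Idx : Set (ℤ × ℝ)), {t ∈ S' | kf t = p.1 ∧ ef t = p.2}).Finite :=
      Set.Finite.biUnion (Idx.finite_toSet) (fun p hp => hcon p hp)
    exact hS' (hfin.subset hcover)
  obtain ⟨⟨k₀, e₀⟩, hpIdx, hfib⟩ := hfibex
  set T := {t ∈ S' | kf t = k₀ ∧ ef t = e₀} with hT
  obtain ⟨t₁, ht₁⟩ := hfib.nonempty
  have hprops₁ := hkey t₁ ht₁.1
  have hk₀0 : k₀ ≠ 0 := ht₁.2.1 ▸ hprops₁.2.2.1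
  have he₀ : e₀ = 1 ∨ e₀ = -1 := ht₁.2.2 ▸ hprops₁.2.2.2.2.1
  have hee₀ : e₀ * e₀ = 1 := by rcases he₀ with h' | h' <;> rw [h'] <;> norm_num
  obtain ⟨h, hirr, hann, hpos⟩ := exists_irred_ann A B C D hB hD hAB hr
  set κ := (k₀:ℝ) * Real.pi with hκ
  have hκ0 : κ ≠ 0 := mul_ne_zero (Int.cast_ne_zero.mpr hk₀0) Real.pi_ne_zero
  have hTdom : ∀ t ∈ T, B.eval t ≠ 0 ∧ D.eval t ≠ 0 := by
    intro t ht
    have htI : t ∈ I := ht.1.1.1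
    exact ⟨(hI htI).1, (hI htI).2⟩
  have hTann2 : ∀ t ∈ T,
      evxy (A.eval t / B.eval t) (C.eval t / D.eval t) (TrB e₀ κ h) = 0 := by
    intro t ht
    have props := hkey t ht.1
    obtain ⟨hsI, hsF, hk0, hkb, he, hrse, hθrel⟩ := props
    rw [evxy_TrB]
    have h1 : e₀ * (A.eval t / B.eval t) = A.eval (sf t) / B.eval (sf t) := by
      have h' := hrse
      rw [ht.2.2] at h'
      simpa [ratFun] using h'.symm
    have h2 : C.eval t / D.eval t + κ = C.eval (sf t) / D.eval (sf t) := by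
      have h' := hθrel
      rw [ht.2.1] at h'
      simpa [ratFun, hκ] using h'.symm
    rw [h1, h2]
    exact hann (sf t) (hI hsI).1 (hI hsI).2
  by_cases hd : h.map phiF ∣ (TrB e₀ κ h).map phiF
  · obtain ⟨e1, e2, he2, heq⟩ := dvd_to_heq h hirr.ne_zero e₀ κ hee₀ hd
    exact dvd_case_false A B C D hB hD hAB hr h hirr.ne_zero hann e₀ κ hee₀ hκ0 e1 e2 he2 heq
  · exact coprime_case_false A B C D hB hD hAB hr h hirr hpos hann e₀ κ hd T hfib hTdom hTann2


/- STATEMENT 13: let r, θ be nonconstant, the parametrization proper, and I ⊆ Ω a set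
containing infinitely many parameters t for which some s ∈ I, s ≠ t, satisfies
P(s) = P(t).  Then θ is unbounded on I; consequently, either the closure of I contains
a real root t₀ of D with |θ(t)| → ∞ from at least one side of t₀, or I is unbounded
above and θ(t) → ±∞ as t → +∞, or I is unbounded below and θ(t) → ±∞ as t → −∞
(so the closure of I in ℝ ∪ {±∞} contains a value generating a limit point, a limit
circle or a spiral branch). -/
theorem self_intersections_accumulate_at_limit_feature
    (A B C D : Polynomial ℝ) (hB : B ≠ 0) (hD : D ≠ 0)
    (hAB : IsCoprime A B) (hCD : IsCoprime C D)
    (hr : ¬ (A.natDegree = 0 ∧ B.natDegree = 0))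
    (hθ : ¬ (C.natDegree = 0 ∧ D.natDegree = 0))
    (hproper : IsProperPolar A B C D)
    (I : Set ℝ) (hI : I ⊆ polarDomain B D)
    (hinf : {t ∈ I | ∃ s ∈ I, s ≠ t ∧ polarCurve A B C D s = polarCurve A B C D t}.Infinite) :
    (¬ ∃ M : ℝ, ∀ t ∈ I, |ratFun C D t| ≤ M) ∧
    ((∃ t₀ : ℝ, D.eval t₀ = 0 ∧ t₀ ∈ closure I ∧
        (Tendsto (fun t => |ratFun C D t|) (nhdsWithin t₀ (Set.Iio t₀)) atTop ∨
         Tendsto (fun t => |ratFun C D t|) (nhdsWithin t₀ (Set.Ioi t₀)) atTop)) ∨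
     (¬ BddAbove I ∧
        (Tendsto (ratFun C D) atTop atTop ∨ Tendsto (ratFun C D) atTop atBot)) ∨
     (¬ BddBelow I ∧
        (Tendsto (ratFun C D) atBot atTop ∨ Tendsto (ratFun C D) atBot atBot))) := by
  have h1 := part_one A B C D hB hD hAB hCD hr hθ hproper I hI hinf
  refine ⟨h1, ?_⟩
  have h2 := part_two C D hD hCD I (by
    intro ⟨M, hM⟩
    exact h1 ⟨M, fun t ht => hM t ht⟩)
  exact h2
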